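/- Let U ⊆ ℝⁿ be open, m ∈ ℕ, g₁, …, g_m : U → ℝ continuous maps that are C^{1,1}-submersions on their zero sets, and let Ω = {x ∈ U | g₁(x) ≤ 0, …, g_m(x) ≤ 0} be closed in ℝⁿ and connected. If Ω is convex, x is a boundary point of Ω, and the derivatives g_i'(x) for i ∈ A(x) are linearly independent, then for every i ∈ A(x) and every h ∈ C(x) ∩ ker g_i'(x) one has liminf_{t→0⁺} g_i'(x + t·h)h / t ≥ 0. -/

import Mathlib

open Filter Metric Set
open scoped Topology RealInnerProductSpace NNReal

/-- `g` is a `C^{1,1}`-submersion on its zero set (relative to the open set `U`): for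
every zero `x ∈ U` of `g`, `g` is differentiable with Lipschitz continuous derivative on a
neighborhood of `x`, and the derivative of `g` at `x` is surjective (i.e. nonzero). -/
def C11SubmersionOnZeroSet {n : ℕ} (U : Set (EuclideanSpace ℝ (Fin n)))
    (g : EuclideanSpace ℝ (Fin n) → ℝ) : Prop :=
  ∀ x ∈ U, g x = 0 →
    (∃ V, IsOpen V ∧ x ∈ V ∧ V ⊆ U ∧ (∀ y ∈ V, DifferentiableAt ℝ g y) ∧
      ∃ K : ℝ≥0, LipschitzOnWith K (fun y => fderiv ℝ g y) V) ∧
    fderiv ℝ g x ≠ 0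


/-- One-sided mean value inequality. -/
lemma mvt_le {u φ : ℝ → ℝ} {a b B : ℝ} (hab : a ≤ b)
    (hd : ∀ σ ∈ Icc a b, HasDerivAt u (φ σ) σ)
    (hB : ∀ σ ∈ Icc a b, φ σ ≤ B) : u b - u a ≤ B * (b - a) := by
  have key : MonotoneOn (fun σ => B * σ - u σ) (Icc a b) := by
    have hD : ∀ σ ∈ Icc a b, HasDerivAt (fun σ => B * σ - u σ) (B - φ σ) σ := by
      intro σ hσ
      have := ((hasDerivAt_id σ).const_mul B).sub (hd σ hσ)
      rw [mul_one] at this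
      exact this
    apply monotoneOn_of_deriv_nonneg (convex_Icc a b)
    · exact fun σ hσ => (hD σ hσ).continuousAt.continuousWithinAt
    · intro σ hσ
      rw [interior_Icc] at hσ
      exact (hD σ (Ioo_subset_Icc_self hσ)).differentiableAt.differentiableWithinAt
    · intro σ hσ
      rw [interior_Icc] at hσ
      rw [(hD σ (Ioo_subset_Icc_self hσ)).deriv]
      have := hB σ (Ioo_subset_Icc_self hσ)
      linarith
  have := key (left_mem_Icc.2 hab) (right_mem_Icc.2 hab) hab
  simp only at this
  linarith

/-- Quadratic Taylor-type bound for a function with Lipschitz derivative. -/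
lemma quad_bound {n : ℕ} {f : EuclideanSpace ℝ (Fin n) → ℝ} {V : Set (EuclideanSpace ℝ (Fin n))}
    (hd : ∀ y ∈ V, DifferentiableAt ℝ f y) {K : ℝ≥0}
    (hl : LipschitzOnWith K (fun y => fderiv ℝ f y) V) {y z : EuclideanSpace ℝ (Fin n)}
    (hseg : segment ℝ y z ⊆ V) :
    |f z - f y - fderiv ℝ f y (z - y)| ≤ K * ‖z - y‖ ^ 2 := by
  have hys : y ∈ segment ℝ y z := left_mem_segment ℝ y z
  have hzs : z ∈ segment ℝ y z := right_mem_segment ℝ y z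
  have hder : ∀ w ∈ segment ℝ y z,
      HasFDerivWithinAt f (fderiv ℝ f w) (segment ℝ y z) w :=
    fun w hw => ((hd w (hseg hw)).hasFDerivAt).hasFDerivWithinAt
  have bound : ∀ w ∈ segment ℝ y z, ‖fderiv ℝ f w - fderiv ℝ f y‖ ≤ (K : ℝ) * ‖z - y‖ := by
    intro w hw
    have h1 : dist (fderiv ℝ f w) (fderiv ℝ f y) ≤ (K : ℝ) * dist w y :=
      hl.dist_le_mul w (hseg hw) y (hseg hys)
    rw [dist_eq_norm, dist_eq_norm] at h1
    have : ‖w - y‖ ≤ ‖z - y‖ := by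
      obtain ⟨a, b, ha, hb, hab, rfl⟩ := hw
      have hyz : a • y + b • z - y = b • (z - y) := by
        rw [show a = 1 - b by linarith]; module
      rw [hyz, norm_smul, Real.norm_eq_abs, abs_of_nonneg hb]
      nlinarith [norm_nonneg (z - y)]
    calc ‖fderiv ℝ f w - fderiv ℝ f y‖ ≤ (K : ℝ) * ‖w - y‖ := h1
      _ ≤ (K : ℝ) * ‖z - y‖ := mul_le_mul_of_nonneg_left this (NNReal.coe_nonneg K)
  have := Convex.norm_image_sub_le_of_norm_hasFDerivWithin_le' hder bound
    (convex_segment y z) hys hzs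
  calc |f z - f y - fderiv ℝ f y (z - y)| ≤ (K : ℝ) * ‖z - y‖ * ‖z - y‖ := by
        simpa [Real.norm_eq_abs] using this
    _ = K * ‖z - y‖ ^ 2 := by ring

/-- Derivative of `f` along the line `t ↦ x + t • h`. -/
lemma line_hasDerivAt {n : ℕ} {f : EuclideanSpace ℝ (Fin n) → ℝ}
    {x h : EuclideanSpace ℝ (Fin n)} {t : ℝ} (hd : DifferentiableAt ℝ f (x + t • h)) :
    HasDerivAt (fun s : ℝ => f (x + s • h)) (fderiv ℝ f (x + t • h) h) t := by
  have hγ : HasDerivAt (fun s : ℝ => x + s • h) h t := by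
    simpa using ((hasDerivAt_id t).smul_const h).const_add x
  exact (hd.hasFDerivAt).comp_hasDerivAt t hγ

/-- Linearly independent continuous linear functionals can hit any prescribed values. -/
lemma exists_dual_vec {n : ℕ} {ι : Type*} (F : ι → (EuclideanSpace ℝ (Fin n) →L[ℝ] ℝ))
    (hF : LinearIndependent ℝ F) (c : ι → ℝ) :
    ∃ w : EuclideanSpace ℝ (Fin n), ∀ j, F j w = c j := by
  classical
  set E := EuclideanSpace ℝ (Fin n)
  set G : ι → Module.Dual ℝ E := fun j => (F j : E →ₗ[ℝ] ℝ) with hG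
  have hGli : LinearIndependent ℝ G := by
    apply hF.map' (ContinuousLinearMap.coeLM ℝ)
    rw [LinearMap.ker_eq_bot]
    exact fun a b hab => ContinuousLinearMap.coe_injective hab
  set p := Submodule.span ℝ (Set.range G)
  have hmem : ∀ j, G j ∈ p := fun j => Submodule.subset_span ⟨j, rfl⟩
  set ξ₀ : p →ₗ[ℝ] ℝ := (Finsupp.linearCombination ℝ c).comp hGli.repr with hξ₀
  obtain ⟨ξ, hξ⟩ := LinearMap.exists_extend ξ₀
  refine ⟨(Module.evalEquiv ℝ E).symm ξ, fun j => ?_⟩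
  have h1 : F j ((Module.evalEquiv ℝ E).symm ξ) = G j ((Module.evalEquiv ℝ E).symm ξ) := rfl
  rw [h1, Module.apply_evalEquiv_symm_apply]
  have h2 : ξ (G j) = ξ₀ ⟨G j, hmem j⟩ := by
    rw [← hξ]; rfl
  rw [h2, hξ₀]
  simp only [LinearMap.comp_apply]
  rw [hGli.repr_eq_single j ⟨G j, hmem j⟩ rfl]
  simp

/-- quadratic bound from a Lipschitz-type estimate on the derivative -/
lemma core_taylor {u φ : ℝ → ℝ} {t L : ℝ} (hL : 0 < L) (ht : 0 ≤ t)
    (hd : ∀ σ ∈ Icc (0:ℝ) t, HasDerivAt u (φ σ) σ)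
    (hφlip : ∀ σ ∈ Icc (0:ℝ) t, ∀ τ ∈ Icc (0:ℝ) t, |φ σ - φ τ| ≤ L * |σ - τ|)
    (hu0 : u 0 = 0) (hφ0 : φ 0 = 0) :
    ∀ σ, 0 ≤ σ → σ ≤ t → |u σ| ≤ L * σ^2 := by
  have hφsmall : ∀ σ ∈ Icc (0:ℝ) t, |φ σ| ≤ L * σ := by
    intro σ hσ
    have := hφlip σ hσ 0 ⟨le_rfl, ht⟩
    rw [hφ0, sub_zero, sub_zero, abs_of_nonneg hσ.1] at this
    exact this
  intro σ h0 hσt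
  have hsub : Icc (0:ℝ) σ ⊆ Icc (0:ℝ) t := Icc_subset_Icc le_rfl hσt
  have hup := mvt_le (u := u) (φ := φ) (B := L*σ) h0
    (fun τ hτ => hd τ (hsub hτ))
    (fun τ hτ => by
      have h1 := le_of_abs_le (hφsmall τ (hsub hτ))
      nlinarith [hτ.2, hL.le])
  have hdown := mvt_le (u := fun σ => -(u σ)) (φ := fun σ => -(φ σ)) (B := L*σ) h0
    (fun τ hτ => (hd τ (hsub hτ)).neg)
    (fun τ hτ => by
      show -(φ τ) ≤ L * σ
      have h1 := neg_le_of_abs_le (hφsmall τ (hsub hτ))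
      nlinarith [hτ.2, hL.le])
  rw [hu0] at hup
  rw [hu0] at hdown
  rw [abs_le]; constructor <;> nlinarith

set_option maxHeartbeats 1000000 in
/-- the final contradiction chain, in purely one-dimensional form -/
lemma core_P {u φ : ℝ → ℝ} {t L c M : ℝ}
    (hL : 0 < L) (hc : 0 < c) (hcL : c ≤ L) (hM : 0 ≤ M)
    (ht1 : 0 < t) (ht5 : 3*M/2*t < c^2/(16*L))
    (hd : ∀ σ ∈ Icc (0:ℝ) t, HasDerivAt u (φ σ) σ)
    (hφlip : ∀ σ ∈ Icc (0:ℝ) t, ∀ τ ∈ Icc (0:ℝ) t, |φ σ - φ τ| ≤ L * |σ - τ|)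
    (hu0 : u 0 = 0) (hφ0 : φ 0 = 0)
    (star : ∀ θ : ℝ, 0 < θ → θ ≤ 1 → u (θ*t) ≤ θ * u t + M*t^3) :
    -c * t ≤ φ t := by
  by_contra hcon
  push_neg at hcon
  have taylor := core_taylor hL ht1.le hd hφlip hu0 hφ0
  set δ' : ℝ := c/(2*L) with hδ'def
  have hδ0 : 0 < δ' := by rw [hδ'def]; positivity
  have hδhalf : δ' ≤ 1/2 := by
    rw [hδ'def, div_le_iff₀ (by positivity : (0:ℝ) < 2*L)]
    linarith
  have hLδ : L * δ' = c/2 := by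
    rw [hδ'def]; field_simp
  clear_value δ'
  have h1δ : 0 < 1 - δ' := by linarith
  have ha' : ∀ σ ∈ Icc ((1-δ')*t) t, φ σ ≤ -(c/2)*t := by
    intro σ hσ
    have hσ0 : (0:ℝ) ≤ σ := le_trans (by positivity) hσ.1
    have hl1 := (abs_le.mp (hφlip σ ⟨hσ0, hσ.2⟩ t ⟨ht1.le, le_rfl⟩)).2
    have hl2 : |σ - t| = t - σ := by rw [abs_sub_comm, abs_of_nonneg (by linarith [hσ.2])]
    rw [hl2] at hl1
    have hl3 : t - σ ≤ δ' * t := by nlinarith [hσ.1]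
    have hl4 : L * (t - σ) ≤ L * (δ' * t) := by nlinarith
    have hl5 : L * (δ' * t) = (c/2) * t := by rw [← mul_assoc, hLδ]
    nlinarith [hcon]
  have hb := mvt_le (u := u) (φ := φ) (B := -(c/2)*t)
    (a := (1-δ')*t) (b := t) (by nlinarith)
    (fun σ hσ => hd σ ⟨le_trans (by positivity) hσ.1, hσ.2⟩) ha'
  have hstar1 := star (1-δ') h1δ (by linarith)
  have hstar2 := star (δ'/2) (by linarith) (by linarith)
  have htay := taylor ((δ'/2)*t) (by positivity) (by nlinarith)
  have e1 : δ' * (u t) ≤ M*t^3 - (c/2)*δ'*t^2 := by nlinarith [hb, hstar1]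
  have htaylow := neg_le_of_abs_le htay
  have e5 : L*((δ'/2)*t)^2 = c*δ'*t^2/8 := by
    rw [show L*((δ'/2)*t)^2 = (L*δ')*(δ'*t^2)/4 from by ring, hLδ]; ring
  have e4 : (c/8)*δ'*t^2 ≤ (3*M/2)*t^3 := by nlinarith [e1, hstar2, htaylow, e5]
  have e7 : c^2/(16*L) = (c/8)*δ' := by
    rw [hδ'def]; field_simp; ring
  have e6 : (3*M/2)*t^3 < (c/8)*δ'*t^2 := by
    have := mul_lt_mul_of_pos_right ht5 (by positivity : (0:ℝ) < t^2)
    rw [e7] at this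
    nlinarith [this]
  linarith

/-- existence of a zero for a function with derivative ≥ 1/2 -/
lemma core_ivt {r ρ : ℝ → ℝ} {A : ℝ} (hA : 0 < A) (hr0 : |r 0| ≤ A/2)
    (hd : ∀ σ ∈ Icc (-A) A, HasDerivAt r (ρ σ) σ)
    (hρ : ∀ σ ∈ Icc (-A) A, 1/2 ≤ ρ σ) :
    ∃ s ∈ Icc (-A) A, r s = 0 := by
  have hcont : ContinuousOn r (Icc (-A) A) :=
    fun σ hσ => (hd σ hσ).continuousAt.continuousWithinAt
  have hsub1 : Icc (0:ℝ) A ⊆ Icc (-A) A := Icc_subset_Icc (by linarith) le_rfl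
  have hsub2 : Icc (-A) (0:ℝ) ⊆ Icc (-A) A := Icc_subset_Icc le_rfl (by linarith)
  have hra := mvt_le (u := fun σ => -(r σ)) (φ := fun σ => -(ρ σ)) (B := -(1/2))
    (a := 0) (b := A) hA.le
    (fun τ hτ => (hd τ (hsub1 hτ)).neg)
    (fun τ hτ => by
      show -(ρ τ) ≤ -(1/2)
      have := hρ τ (hsub1 hτ); linarith)
  have hrb := mvt_le (u := fun σ => -(r σ)) (φ := fun σ => -(ρ σ)) (B := -(1/2))
    (a := -A) (b := 0) (by linarith)
    (fun τ hτ => (hd τ (hsub2 hτ)).neg)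
    (fun τ hτ => by
      show -(ρ τ) ≤ -(1/2)
      have := hρ τ (hsub2 hτ); linarith)
  have habs := abs_le.mp hr0
  have hiv := intermediate_value_Icc (by linarith : -A ≤ A) hcont
  have h0m : (0:ℝ) ∈ Icc (r (-A)) (r A) := by
    constructor
    · nlinarith [hrb]
    · nlinarith [hra]
  obtain ⟨s, hsmem, hs0⟩ := hiv h0m
  exact ⟨s, hsmem, hs0⟩

set_option maxHeartbeats 4000000 in
lemma strict_case {n m : ℕ}
    (U : Set (EuclideanSpace ℝ (Fin n)))
    (g : Fin m → EuclideanSpace ℝ (Fin n) → ℝ)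
    (hgc : ∀ j, ContinuousOn (g j) U) (hU : IsOpen U)
    (Ω : Set (EuclideanSpace ℝ (Fin n)))
    (hΩ : Ω = {x | x ∈ U ∧ ∀ i, g i x ≤ 0})
    (hconv : Convex ℝ Ω)
    (x : EuclideanSpace ℝ (Fin n)) (hxΩ : x ∈ Ω)
    (hdact : ∀ j, g j x = 0 → DifferentiableAt ℝ (g j) x)
    (i : Fin m) (hi : g i x = 0)
    (V : Set (EuclideanSpace ℝ (Fin n))) (hVo : IsOpen V) (hxV : x ∈ V) (hVU : V ⊆ U)
    (hdV : ∀ y ∈ V, DifferentiableAt ℝ (g i) y)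
    (K : ℝ≥0) (hlip : LipschitzOnWith K (fun y => fderiv ℝ (g i) y) V)
    (hne : fderiv ℝ (g i) x ≠ 0)
    (h : EuclideanSpace ℝ (Fin n)) (hker : fderiv ℝ (g i) x h = 0)
    (hstrict : ∀ j, j ≠ i → g j x = 0 → fderiv ℝ (g j) x h < 0)
    {c : ℝ} (hc : 0 < c) :
    ∀ᶠ t in 𝓝[>] (0:ℝ), -c ≤ fderiv ℝ (g i) (x + t • h) h / t := by
  have hL : (0:ℝ) < (K:ℝ) * ‖h‖^2 + 1 := by positivity
  set L : ℝ := (K:ℝ) * ‖h‖^2 + 1 with hLdef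
  have hKh : (K:ℝ) * ‖h‖^2 ≤ L := by simp [hLdef]
  clear_value L
  -- reduce to the case c ≤ L
  suffices H : ∀ c' : ℝ, 0 < c' → c' ≤ L →
      ∀ᶠ t in 𝓝[>] (0:ℝ), -c' ≤ fderiv ℝ (g i) (x + t • h) h / t by
    have hmin := H (min c L) (lt_min hc hL) (min_le_right _ _)
    filter_upwards [hmin] with t ht
    have : -c ≤ -(min c L) := by
      have := min_le_left c L; linarith
    linarith
  clear hc c
  intro c hc hcL
  -- basic membership facts
  have hxU : x ∈ U := by rw [hΩ] at hxΩ; exact hxΩ.1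
  have hxg : ∀ j, g j x ≤ 0 := by rw [hΩ] at hxΩ; exact hxΩ.2
  -- a vector v with (g i)'(x) v = 1
  obtain ⟨z₀, hz₀⟩ : ∃ z₀, fderiv ℝ (g i) x z₀ ≠ 0 := by
    by_contra hcon; push_neg at hcon
    exact hne (ContinuousLinearMap.ext fun z => by simp [hcon z])
  set v : EuclideanSpace ℝ (Fin n) := (fderiv ℝ (g i) x z₀)⁻¹ • z₀ with hvdef
  have hv : fderiv ℝ (g i) x v = 1 := by
    rw [hvdef, map_smul, smul_eq_mul]; field_simp
  clear_value v
  -- a good ball around x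
  have hev : ∀ᶠ y in 𝓝 x, y ∈ V ∧ ∀ j, g j x < 0 → g j y < 0 := by
    refine (hVo.eventually_mem hxV).and ?_
    rw [eventually_all]
    intro j
    by_cases hj : g j x < 0
    · have hcont : ContinuousAt (g j) x := (hgc j).continuousAt (hU.mem_nhds hxU)
      have : ∀ᶠ y in 𝓝 x, g j y < 0 := hcont.eventually_lt_const hj
      filter_upwards [this] with y hy _; exact hy
    · filter_upwards with y hy; exact absurd hy hj
  obtain ⟨r₀, hr₀pos, hball⟩ := Metric.eventually_nhds_iff_ball.mp hev
  have hballV : ball x r₀ ⊆ V := fun y hy => (hball y hy).1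
  -- constants
  have hC₂ : (0:ℝ) ≤ 4*K*L^2*‖v‖^2 + 2*K*L*‖h‖*‖v‖ := by positivity
  set C₂ : ℝ := 4*K*L^2*‖v‖^2 + 2*K*L*‖h‖*‖v‖ with hC₂def
  set M : ℝ := 2*C₂ with hMdef
  have hM : 0 ≤ M := by simp [hMdef]; linarith
  clear_value C₂ M
  -- eventual smallness conditions
  have poly_ev : ∀ (P : ℝ → ℝ), Continuous P → P 0 = 0 → ∀ b : ℝ, 0 < b →
      ∀ᶠ t in 𝓝[>] (0:ℝ), P t < b := by
    intro P hP h0 b hb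
    have h1 : Tendsto P (𝓝 0) (𝓝 (P 0)) := hP.tendsto 0
    rw [h0] at h1
    exact (h1.eventually_lt_const hb).filter_mono nhdsWithin_le_nhds
  have ev1 : ∀ᶠ t in 𝓝[>] (0:ℝ), 0 < t := by
    filter_upwards [self_mem_nhdsWithin] with t ht; exact ht
  have ev2 : ∀ᶠ t in 𝓝[>] (0:ℝ), t ≤ 1 :=
    (eventually_le_nhds zero_lt_one).filter_mono nhdsWithin_le_nhds
  have ev3 : ∀ᶠ t in 𝓝[>] (0:ℝ), t*‖h‖ + 2*L*t^2*‖v‖ < r₀ := by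
    apply poly_ev _ (by fun_prop) (by norm_num) _ hr₀pos
  have ev4 : ∀ᶠ t in 𝓝[>] (0:ℝ), (K:ℝ)*(t*‖h‖ + 2*L*t^2*‖v‖)*‖v‖ < 1/2 := by
    apply poly_ev _ (by fun_prop) (by norm_num) _ (by norm_num)
  have ev5 : ∀ᶠ t in 𝓝[>] (0:ℝ), (3*M/2)*t < c^2/(16*L) := by
    apply poly_ev _ (by fun_prop) (by norm_num) _ (by positivity)
  have ev6 : ∀ᶠ t in 𝓝[>] (0:ℝ), ∀ j, j ≠ i → g j x = 0 →
      ∀ s : ℝ, |s| ≤ 2*L*t^2 → g j (x + t•h + s•v) < 0 := by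
    rw [eventually_all]
    intro j
    by_cases hji : j = i
    · filter_upwards with t hj; exact absurd hji hj
    by_cases hj0 : g j x = 0
    swap
    · filter_upwards with t _ hj; exact absurd hj hj0
    have ha : (0:ℝ) < -(fderiv ℝ (g j) x h) := by
      have := hstrict j hji hj0; linarith
    set a : ℝ := -(fderiv ℝ (g j) x h) with hadef
    have hεpos : (0:ℝ) < a / (2*(‖h‖+‖v‖+1)) := by positivity
    have hlo := ((hdact j hj0).hasFDerivAt.isLittleO).bound hεpos
    obtain ⟨δ, hδpos, hδ⟩ := Metric.eventually_nhds_iff.mp hlo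
    have evA : ∀ᶠ t in 𝓝[>] (0:ℝ), 2*L*t ≤ 1 := by
      have := poly_ev (fun t => 2*L*t) (by fun_prop) (by norm_num) 1 one_pos
      filter_upwards [this] with t ht; linarith
    have evB : ∀ᶠ t in 𝓝[>] (0:ℝ), t*(‖h‖+‖v‖) < δ :=
      poly_ev _ (by fun_prop) (by norm_num) _ hδpos
    have evC : ∀ᶠ t in 𝓝[>] (0:ℝ), t * (2*L*(|fderiv ℝ (g j) x v|+1)) < a/4 :=
      poly_ev _ (by fun_prop) (by norm_num) _ (by positivity)
    filter_upwards [ev1, evA, evB, evC] with t ht0 htA htB htC _ _ s hs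
    have hznorm : ‖t•h + s•v‖ ≤ t*(‖h‖+‖v‖) := by
      calc ‖t•h + s•v‖ ≤ ‖t•h‖ + ‖s•v‖ := norm_add_le _ _
        _ = t*‖h‖ + |s| * ‖v‖ := by
            rw [norm_smul, norm_smul, Real.norm_eq_abs, Real.norm_eq_abs, abs_of_pos ht0]
        _ ≤ t*‖h‖ + (2*L*t^2)*‖v‖ := by
            have : (0:ℝ) ≤ ‖v‖ := norm_nonneg v
            nlinarith
        _ ≤ t*(‖h‖+‖v‖) := by
            have h' := mul_le_mul_of_nonneg_right htA (mul_nonneg ht0.le (norm_nonneg v))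
            nlinarith [norm_nonneg v]
    have hzx : x + t•h + s•v - x = t•h + s•v := by
      rw [add_assoc, add_sub_cancel_left]
    have hdz : dist (x + t•h + s•v) x < δ := by
      rw [dist_eq_norm, hzx]; linarith
    have hquad := hδ hdz
    rw [hzx, hj0] at hquad
    have hlin : fderiv ℝ (g j) x (t•h + s•v) = t * (fderiv ℝ (g j) x h) + s * (fderiv ℝ (g j) x v) := by
      rw [map_add, map_smul, map_smul]; rfl
    have h1 : g j (x + t•h + s•v) ≤ t * (fderiv ℝ (g j) x h) + s * (fderiv ℝ (g j) x v)
        + (a / (2*(‖h‖+‖v‖+1))) * ‖t•h + s•v‖ := by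
      have := hquad
      rw [hlin] at this
      have habs := abs_le.mp (by simpa [Real.norm_eq_abs] using this)
      linarith [habs.2]
    have h2 : s * (fderiv ℝ (g j) x v) ≤ (2*L*t^2) * |fderiv ℝ (g j) x v| := by
      calc s * (fderiv ℝ (g j) x v) ≤ |s * (fderiv ℝ (g j) x v)| := le_abs_self _
        _ = |s| * |fderiv ℝ (g j) x v| := abs_mul _ _
        _ ≤ (2*L*t^2) * |fderiv ℝ (g j) x v| := by
            have := abs_nonneg (fderiv ℝ (g j) x v); nlinarith
    have h3 : (a / (2*(‖h‖+‖v‖+1))) * ‖t•h + s•v‖ ≤ (a/2) * t := by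
      have hnn : (0:ℝ) < ‖h‖+‖v‖+1 := by positivity
      have := hznorm
      rw [div_mul_eq_mul_div, div_le_iff₀ (by positivity)]
      have h4 : a * ‖t•h + s•v‖ ≤ a * (t*(‖h‖+‖v‖)) := by nlinarith
      nlinarith [norm_nonneg (t•h + s•v)]
    have h5 : (2*L*t^2) * |fderiv ℝ (g j) x v| ≤ (a/4)*t := by
      have h6 : t * (2*L*(|fderiv ℝ (g j) x v|+1)) < a/4 := htC
      have hL' : (0:ℝ) < L := hL
      nlinarith [abs_nonneg (fderiv ℝ (g j) x v), sq_nonneg t]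
    have hat : t * (fderiv ℝ (g j) x h) = -(a*t) := by rw [hadef]; ring
    nlinarith [mul_pos ha ht0]

  -- main eventual statement
  filter_upwards [ev1, ev2, ev3, ev4, ev5, ev6] with t ht1 ht2 ht3 ht4 ht5 ht6
  rw [le_div_iff₀ ht1]
  -- membership of the relevant points in the good ball
  have hmem : ∀ σ : ℝ, 0 ≤ σ → σ ≤ t → ∀ s : ℝ, |s| ≤ 2*L*t^2 →
      x + σ•h + s•v ∈ ball x r₀ := by
    intro σ h0 hσ s hs
    rw [mem_ball, dist_eq_norm, add_assoc, add_sub_cancel_left]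
    calc ‖σ•h + s•v‖ ≤ ‖σ•h‖ + ‖s•v‖ := norm_add_le _ _
      _ = σ*‖h‖ + |s| * ‖v‖ := by
          rw [norm_smul, norm_smul, Real.norm_eq_abs, Real.norm_eq_abs, abs_of_nonneg h0]
      _ ≤ t*‖h‖ + 2*L*t^2*‖v‖ := by nlinarith [norm_nonneg v, norm_nonneg h, abs_nonneg s]
      _ < r₀ := ht3
  have hmem0 : ∀ σ : ℝ, 0 ≤ σ → σ ≤ t → x + σ•h ∈ ball x r₀ := by
    intro σ h0 hσ
    rw [mem_ball, dist_eq_norm, add_sub_cancel_left]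
    have e1 : σ*‖h‖ ≤ t*‖h‖ := mul_le_mul_of_nonneg_right hσ (norm_nonneg h)
    have e2 : (0:ℝ) ≤ 2*L*t^2*‖v‖ := by positivity
    calc ‖σ•h‖ = σ*‖h‖ := by rw [norm_smul, Real.norm_eq_abs, abs_of_nonneg h0]
      _ < r₀ := by linarith
  have hd_u : ∀ σ ∈ Icc (0:ℝ) t,
      HasDerivAt (fun σ : ℝ => g i (x + σ•h)) (fderiv ℝ (g i) (x+σ•h) h) σ :=
    fun σ hσ => line_hasDerivAt (hdV _ (hballV (hmem0 σ hσ.1 hσ.2)))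
  have hDlip : ∀ (y z : EuclideanSpace ℝ (Fin n)), y ∈ V → z ∈ V → ∀ w,
      |fderiv ℝ (g i) y w - fderiv ℝ (g i) z w| ≤ K * ‖y - z‖ * ‖w‖ := by
    intro y z hy hz w
    have h1 : ‖fderiv ℝ (g i) y - fderiv ℝ (g i) z‖ ≤ K * ‖y - z‖ := by
      have := hlip.dist_le_mul y hy z hz
      rw [dist_eq_norm, dist_eq_norm] at this; exact this
    calc |fderiv ℝ (g i) y w - fderiv ℝ (g i) z w|
        = ‖(fderiv ℝ (g i) y - fderiv ℝ (g i) z) w‖ := by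
          rw [ContinuousLinearMap.sub_apply, Real.norm_eq_abs]
      _ ≤ ‖fderiv ℝ (g i) y - fderiv ℝ (g i) z‖ * ‖w‖ :=
          ContinuousLinearMap.le_opNorm _ _
      _ ≤ K * ‖y - z‖ * ‖w‖ := mul_le_mul_of_nonneg_right h1 (norm_nonneg w)
  have hφlip : ∀ σ ∈ Icc (0:ℝ) t, ∀ τ ∈ Icc (0:ℝ) t,
      |fderiv ℝ (g i) (x+σ•h) h - fderiv ℝ (g i) (x+τ•h) h| ≤ L * |σ - τ| := by
    intro σ hσ τ hτ
    have hb2 := hDlip (x+σ•h) (x+τ•h) (hballV (hmem0 σ hσ.1 hσ.2))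
      (hballV (hmem0 τ hτ.1 hτ.2)) h
    have e : x + σ•h - (x + τ•h) = (σ - τ)•h := by
      rw [add_sub_add_left_eq_sub, ← sub_smul]
    rw [e, norm_smul, Real.norm_eq_abs] at hb2
    calc |fderiv ℝ (g i) (x+σ•h) h - fderiv ℝ (g i) (x+τ•h) h|
        ≤ K * (|σ - τ| * ‖h‖) * ‖h‖ := hb2
      _ ≤ L * |σ - τ| := by
          nlinarith [mul_nonneg (sub_nonneg.2 hKh) (abs_nonneg (σ - τ)), abs_nonneg (σ - τ)]
  have hx0 : x + (0:ℝ)•h = x := by simp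
  have hφ0 : fderiv ℝ (g i) (x + (0:ℝ)•h) h = 0 := by rw [hx0]; exact hker
  have hu0 : g i (x + (0:ℝ)•h) = 0 := by rw [hx0]; exact hi
  have taylor : ∀ σ : ℝ, 0 ≤ σ → σ ≤ t → |g i (x + σ•h)| ≤ L * σ^2 :=
    core_taylor hL ht1.le hd_u hφlip hu0 hφ0
  -- construction of the boundary point z = x + t•h + s•v
  have hA : (0:ℝ) < 2*L*t^2 := by positivity
  have hd_r : ∀ σ ∈ Icc (-(2*L*t^2)) (2*L*t^2),
      HasDerivAt (fun s : ℝ => g i (x + t•h + s•v)) (fderiv ℝ (g i) (x + t•h + σ•v) v) σ := by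
    intro σ hσ
    exact line_hasDerivAt (hdV _ (hballV (hmem t ht1.le le_rfl σ (abs_le.2 ⟨hσ.1, hσ.2⟩))))
  have hDv : ∀ σ : ℝ, |σ| ≤ 2*L*t^2 → 1/2 ≤ fderiv ℝ (g i) (x + t•h + σ•v) v := by
    intro σ habs
    have hd := hDlip (x + t•h + σ•v) x (hballV (hmem t ht1.le le_rfl σ habs)) hxV v
    rw [show x + t•h + σ•v - x = t•h + σ•v from by rw [add_assoc, add_sub_cancel_left], hv] at hd
    have hnorm : ‖t•h + σ•v‖ ≤ t*‖h‖ + 2*L*t^2*‖v‖ := by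
      calc ‖t•h+σ•v‖ ≤ ‖t•h‖+‖σ•v‖ := norm_add_le _ _
        _ = t*‖h‖ + |σ| * ‖v‖ := by
            rw [norm_smul, norm_smul, Real.norm_eq_abs, Real.norm_eq_abs, abs_of_pos ht1]
        _ ≤ t*‖h‖ + 2*L*t^2*‖v‖ := by nlinarith [norm_nonneg v]
    have h2 : (K:ℝ) * ‖t•h+σ•v‖ * ‖v‖ ≤ (K:ℝ)*(t*‖h‖+2*L*t^2*‖v‖)*‖v‖ :=
      mul_le_mul_of_nonneg_right
        (mul_le_mul_of_nonneg_left hnorm (NNReal.coe_nonneg K)) (norm_nonneg v)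
    have habs2 := abs_le.mp hd
    linarith [habs2.1, habs2.2, ht4]
  have hq0 : x + t•h + (0:ℝ)•v = x + t•h := by simp
  have hut : |g i (x + t•h)| ≤ L*t^2 := taylor t ht1.le le_rfl
  obtain ⟨s, hsmem, hs0⟩ : ∃ s ∈ Icc (-(2*L*t^2)) (2*L*t^2), g i (x + t•h + s•v) = 0 := by
    refine core_ivt hA ?_ hd_r (fun σ hσ => hDv σ (abs_le.2 ⟨hσ.1, hσ.2⟩))
    show |g i (x + t•h + (0:ℝ)•v)| ≤ 2*L*t^2/2
    rw [hq0]
    nlinarith [hut]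
  have hsabs : |s| ≤ 2*L*t^2 := abs_le.2 ⟨hsmem.1, hsmem.2⟩
  -- z ∈ Ω
  have hzBall : x + t•h + s•v ∈ ball x r₀ := hmem t ht1.le le_rfl s hsabs
  have hzΩ : x + t•h + s•v ∈ Ω := by
    rw [hΩ]
    refine ⟨hVU (hballV hzBall), fun j => ?_⟩
    by_cases hji : j = i
    · rw [hji]; exact le_of_eq hs0
    by_cases hj0 : g j x = 0
    · exact (ht6 j hji hj0 s hsabs).le
    · exact ((hball _ hzBall).2 j (lt_of_le_of_ne (hxg j) hj0)).le
  -- derivative at shifted base points is close to 1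
  have hDyv : ∀ σ : ℝ, 0 ≤ σ → σ ≤ t →
      |fderiv ℝ (g i) (x + σ•h) v - 1| ≤ K * (t*‖h‖) * ‖v‖ := by
    intro σ h0 hσ
    have hd := hDlip (x + σ•h) x (hballV (hmem0 σ h0 hσ)) hxV v
    rw [add_sub_cancel_left, hv, norm_smul, Real.norm_eq_abs, abs_of_nonneg h0] at hd
    have h2 : (K:ℝ) * (σ*‖h‖) * ‖v‖ ≤ (K:ℝ) * (t*‖h‖) * ‖v‖ :=
      mul_le_mul_of_nonneg_right (mul_le_mul_of_nonneg_left
        (mul_le_mul_of_nonneg_right hσ (norm_nonneg h)) (NNReal.coe_nonneg K)) (norm_nonneg v)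
    linarith
  have hsegV : ∀ σ : ℝ, 0 ≤ σ → σ ≤ t → ∀ s' : ℝ, |s'| ≤ 2*L*t^2 →
      segment ℝ (x + σ•h) (x + σ•h + s'•v) ⊆ V :=
    fun σ h0 hσ s' hs' => subset_trans
      ((convex_ball x r₀).segment_subset (hmem0 σ h0 hσ) (hmem σ h0 hσ s' hs')) hballV
  have ht34 : t^4 ≤ t^3 := by nlinarith [pow_pos ht1 3]
  -- |s + u t| ≤ C₂ t³
  have hsu : |s + g i (x + t•h)| ≤ C₂ * t^3 := by
    have hq := quad_bound hdV hlip (hsegV t ht1.le le_rfl s hsabs)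
    rw [add_sub_cancel_left, hs0, map_smul, smul_eq_mul, norm_smul, Real.norm_eq_abs] at hq
    have h1 := hDyv t ht1.le le_rfl
    have e1 : s + g i (x + t•h) =
        -(0 - g i (x + t•h) - s * fderiv ℝ (g i) (x + t•h) v)
        + s * (1 - fderiv ℝ (g i) (x + t•h) v) := by ring
    rw [e1]
    have h2 := abs_add_le (-(0 - g i (x + t•h) - s * fderiv ℝ (g i) (x + t•h) v))
      (s * (1 - fderiv ℝ (g i) (x + t•h) v))
    rw [abs_neg] at h2
    have h3 : |s * (1 - fderiv ℝ (g i) (x + t•h) v)|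
        ≤ (2*L*t^2) * ((K:ℝ) * (t*‖h‖) * ‖v‖) := by
      rw [abs_mul, abs_sub_comm]
      exact mul_le_mul hsabs h1 (abs_nonneg _) (by positivity)
    have h4 : (K:ℝ) * (|s| * ‖v‖)^2 ≤ (K:ℝ) * (2*L*t^2)^2 * ‖v‖^2 := by
      nlinarith [mul_nonneg (NNReal.coe_nonneg K) (sq_nonneg ‖v‖), abs_nonneg s,
        mul_le_mul hsabs hsabs (abs_nonneg s) (by positivity : (0:ℝ) ≤ 2*L*t^2)]
    have h5 : (K:ℝ) * (2*L*t^2)^2 * ‖v‖^2 + (2*L*t^2) * ((K:ℝ) * (t*‖h‖) * ‖v‖) ≤ C₂ * t^3 := by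
      rw [hC₂def]
      nlinarith [NNReal.coe_nonneg K, norm_nonneg v, norm_nonneg h, hL.le, ht34,
        mul_nonneg (mul_nonneg (NNReal.coe_nonneg K) (sq_nonneg L)) (sq_nonneg ‖v‖)]
    calc |(-(0 - g i (x + t•h) - s * fderiv ℝ (g i) (x + t•h) v))
        + s * (1 - fderiv ℝ (g i) (x + t•h) v)| ≤ _ := h2
      _ ≤ C₂ * t^3 := by linarith [hq, h3, h4, h5]
  -- the key convexity inequality
  have star : ∀ θ : ℝ, 0 < θ → θ ≤ 1 →
      g i (x + (θ*t)•h) ≤ θ * (g i (x + t•h)) + M * t^3 := by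
    intro θ hθ0 hθ1
    have hθt0 : (0:ℝ) ≤ θ*t := by positivity
    have hθtt : θ*t ≤ t := by nlinarith
    have hθs : |θ*s| ≤ 2*L*t^2 := by
      rw [abs_mul, abs_of_pos hθ0]
      nlinarith [abs_nonneg s]
    have hzx : (x + t•h + s•v) - x = t•h + s•v := by rw [add_assoc, add_sub_cancel_left]
    have hp : x + θ•((x + t•h + s•v) - x) = x + (θ*t)•h + (θ*s)•v := by
      rw [hzx, smul_add, smul_smul, smul_smul, ← add_assoc]
    have hpΩ : x + θ•((x+t•h+s•v) - x) ∈ Ω := hconv.add_smul_sub_mem hxΩ hzΩ ⟨hθ0.le, hθ1⟩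
    rw [hp, hΩ] at hpΩ
    have hgp : g i (x + (θ*t)•h + (θ*s)•v) ≤ 0 := hpΩ.2 i
    have hq2 := quad_bound hdV hlip (hsegV (θ*t) hθt0 hθtt (θ*s) hθs)
    rw [add_sub_cancel_left, map_smul, smul_eq_mul, norm_smul, Real.norm_eq_abs] at hq2
    have h1 := hDyv (θ*t) hθt0 hθtt
    have h2 := (abs_le.mp hq2).1
    have h3 : g i (x + (θ*t)•h) ≤ g i (x + (θ*t)•h + (θ*s)•v)
        - (θ*s) * fderiv ℝ (g i) (x + (θ*t)•h) v + (K:ℝ)*(|θ*s| * ‖v‖)^2 := by linarith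
    have h4 : -((θ*s) * fderiv ℝ (g i) (x + (θ*t)•h) v)
        ≤ -(θ*s) + |θ*s| * ((K:ℝ) * (t*‖h‖) * ‖v‖) := by
      have e2 : -((θ*s) * fderiv ℝ (g i) (x + (θ*t)•h) v)
          = -(θ*s) + (θ*s) * (1 - fderiv ℝ (g i) (x + (θ*t)•h) v) := by ring
      rw [e2]
      have h5 : (θ*s) * (1 - fderiv ℝ (g i) (x + (θ*t)•h) v)
          ≤ |θ*s| * |1 - fderiv ℝ (g i) (x + (θ*t)•h) v| := by
        rw [← abs_mul]; exact le_abs_self _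
      have h6 : |1 - fderiv ℝ (g i) (x + (θ*t)•h) v| ≤ (K:ℝ) * (t*‖h‖) * ‖v‖ := by
        rw [abs_sub_comm]; exact h1
      nlinarith [abs_nonneg (θ*s)]
    have h7 : -(θ*s) ≤ θ * (g i (x + t•h)) + C₂*t^3 := by
      have h8 : -s ≤ g i (x + t•h) + C₂*t^3 := by
        have := (abs_le.mp hsu).1; linarith
      have h9 : θ*(-s) ≤ θ*(g i (x + t•h) + C₂*t^3) :=
        mul_le_mul_of_nonneg_left h8 hθ0.le
      have h10 : θ*(C₂*t^3) ≤ C₂*t^3 := by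
        nlinarith [mul_nonneg (mul_nonneg hC₂ (pow_pos ht1 3).le) (sub_nonneg.2 hθ1)]
      nlinarith
    have h11 : |θ*s| * ((K:ℝ) * (t*‖h‖) * ‖v‖) ≤ (2*L*t^2) * ((K:ℝ) * (t*‖h‖) * ‖v‖) :=
      mul_le_mul_of_nonneg_right hθs (by positivity)
    have h12 : (K:ℝ)*(|θ*s| * ‖v‖)^2 ≤ (K:ℝ) * (2*L*t^2)^2 * ‖v‖^2 := by
      nlinarith [mul_nonneg (NNReal.coe_nonneg K) (sq_nonneg ‖v‖), abs_nonneg (θ*s),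
        mul_le_mul hθs hθs (abs_nonneg _) (by positivity : (0:ℝ) ≤ 2*L*t^2)]
    have h13 : (K:ℝ) * (2*L*t^2)^2 * ‖v‖^2 + (2*L*t^2) * ((K:ℝ) * (t*‖h‖) * ‖v‖) ≤ C₂ * t^3 := by
      rw [hC₂def]
      nlinarith [NNReal.coe_nonneg K, norm_nonneg v, norm_nonneg h, hL.le, ht34,
        mul_nonneg (mul_nonneg (NNReal.coe_nonneg K) (sq_nonneg L)) (sq_nonneg ‖v‖)]
    rw [hMdef]
    linarith [hgp, h3, h4, h7, h11, h12, h13]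
  exact core_P hL hc hcL hM ht1 ht5 hd_u hφlip hu0 hφ0 star

set_option maxHeartbeats 1000000 in
/-- Theorem 3 (ii): second-order necessary condition at boundary points of a convex
sublevel set where the active derivatives are linearly independent. -/
theorem secondOrder_condition_of_convex {n m : ℕ} (hm : 0 < m)
    (U : Set (EuclideanSpace ℝ (Fin n))) (hU : IsOpen U)
    (g : Fin m → EuclideanSpace ℝ (Fin n) → ℝ)
    (hgc : ∀ i, ContinuousOn (g i) U)
    (hgs : ∀ i, C11SubmersionOnZeroSet U (g i))
    (Ω : Set (EuclideanSpace ℝ (Fin n)))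
    (hΩ : Ω = {x | x ∈ U ∧ ∀ i, g i x ≤ 0})
    (hcl : IsClosed Ω) (hconn : IsPreconnected Ω)
    (hconv : Convex ℝ Ω)
    (x : EuclideanSpace ℝ (Fin n)) (hx : x ∈ frontier Ω)
    (hli : LinearIndependent ℝ (fun i : {i : Fin m // g i x = 0} => fderiv ℝ (g i.1) x)) :
    ∀ i, g i x = 0 →
      ∀ h : EuclideanSpace ℝ (Fin n),
        (∀ j, g j x = 0 → fderiv ℝ (g j) x h ≤ 0) → fderiv ℝ (g i) x h = 0 →
        0 ≤ liminf (fun t : ℝ => fderiv ℝ (g i) (x + t • h) h / t) (𝓝[>] (0:ℝ)) := by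
  intro i hi h hC hker
  have hxΩ : x ∈ Ω := hcl.frontier_subset hx
  have hxU : x ∈ U := by rw [hΩ] at hxΩ; exact hxΩ.1
  obtain ⟨⟨V, hVo, hxV, hVU, hdV, K, hlip⟩, hne⟩ := hgs i x hxU hi
  have hdact : ∀ j, g j x = 0 → DifferentiableAt ℝ (g j) x := by
    intro j hj
    obtain ⟨⟨V', hVo', hxV', _, hdV', _⟩, _⟩ := hgs j x hxU hj
    exact hdV' x hxV'
  obtain ⟨w, hw⟩ := exists_dual_vec (fun j : {j : Fin m // g j x = 0} => fderiv ℝ (g j.1) x)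
    hli (fun j => if j.1 = i then 0 else -1)
  have hwi : fderiv ℝ (g i) x w = 0 := by
    have := hw ⟨i, hi⟩; simpa using this
  have hwj : ∀ j, g j x = 0 → j ≠ i → fderiv ℝ (g j) x w = -1 := by
    intro j hj hji
    have := hw ⟨j, hj⟩; simpa [hji] using this
  have hC₆ : (0:ℝ) < (K:ℝ)*‖w‖*(2*‖h‖+‖w‖) + 1 := by positivity
  set C₆ : ℝ := (K:ℝ)*‖w‖*(2*‖h‖+‖w‖) + 1 with hC₆def
  clear_value C₆
  -- eventual facts independent of δ
  have hcurve : ∀ u : EuclideanSpace ℝ (Fin n), ∀ᶠ t in 𝓝[>] (0:ℝ), x + t•u ∈ V := by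
    intro u
    have c1 : Continuous (fun t : ℝ => x + t•u) := by fun_prop
    have h0 : x + (0:ℝ)•u = x := by simp
    have h2 := c1.tendsto 0
    rw [h0] at h2
    exact (h2.eventually (hVo.eventually_mem hxV)).filter_mono nhdsWithin_le_nhds
  have hDlip : ∀ (y z : EuclideanSpace ℝ (Fin n)), y ∈ V → z ∈ V →
      ∀ u, |fderiv ℝ (g i) y u - fderiv ℝ (g i) z u| ≤ K * ‖y - z‖ * ‖u‖ := by
    intro y z hy hz u
    have h1 : ‖fderiv ℝ (g i) y - fderiv ℝ (g i) z‖ ≤ K * ‖y - z‖ := by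
      have := hlip.dist_le_mul y hy z hz
      rw [dist_eq_norm, dist_eq_norm] at this; exact this
    calc |fderiv ℝ (g i) y u - fderiv ℝ (g i) z u|
        = ‖(fderiv ℝ (g i) y - fderiv ℝ (g i) z) u‖ := by
          rw [ContinuousLinearMap.sub_apply, Real.norm_eq_abs]
      _ ≤ ‖fderiv ℝ (g i) y - fderiv ℝ (g i) z‖ * ‖u‖ :=
          ContinuousLinearMap.le_opNorm _ _
      _ ≤ K * ‖y - z‖ * ‖u‖ := mul_le_mul_of_nonneg_right h1 (norm_nonneg u)
  have key : ∀ δ : ℝ, 0 < δ →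
      ∀ᶠ t in 𝓝[>] (0:ℝ), -δ ≤ fderiv ℝ (g i) (x + t•h) h / t := by
    intro δ hδ
    have hεden : (0:ℝ) < 2*C₆ := by positivity
    set ε : ℝ := min 1 (δ/(2*C₆)) with hεdef
    have hε0 : 0 < ε := lt_min one_pos (by positivity)
    have hε1 : ε ≤ 1 := min_le_left _ _
    have hεC : ε * C₆ ≤ δ/2 := by
      have h1 := min_le_right 1 (δ/(2*C₆))
      calc ε*C₆ ≤ (δ/(2*C₆))*C₆ := mul_le_mul_of_nonneg_right h1 hC₆.le
        _ = δ/2 := by field_simp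
    clear_value ε
    have hkerε : fderiv ℝ (g i) x (h + ε•w) = 0 := by
      rw [map_add, map_smul, hker, hwi]; simp
    have hstrictε : ∀ j, j ≠ i → g j x = 0 → fderiv ℝ (g j) x (h + ε•w) < 0 := by
      intro j hji hj
      rw [map_add, map_smul, hwj j hj hji, smul_eq_mul]
      have := hC j hj
      nlinarith
    have hev := strict_case U g hgc hU Ω hΩ hconv x hxΩ hdact i hi V hVo hxV hVU hdV K hlip hne
      (h + ε•w) hkerε hstrictε (half_pos hδ)
    have ht01 : ∀ᶠ t in 𝓝[>] (0:ℝ), 0 < t ∧ t ≤ 1 := by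
      have e1 : ∀ᶠ t in 𝓝[>] (0:ℝ), 0 < t := by
        filter_upwards [self_mem_nhdsWithin] with t ht; exact ht
      exact e1.and ((eventually_le_nhds zero_lt_one).filter_mono nhdsWithin_le_nhds)
    filter_upwards [hev, hcurve h, hcurve (h + ε•w), ht01] with t hta h1V h2V ht01'
    obtain ⟨ht0, ht1le⟩ := ht01'
    rw [le_div_iff₀ ht0] at hta ⊢
    -- comparison of the two derivative terms
    have e : fderiv ℝ (g i) (x+t•h) h - fderiv ℝ (g i) (x+t•(h+ε•w)) (h+ε•w)
        = (fderiv ℝ (g i) (x+t•h) h - fderiv ℝ (g i) (x+t•(h+ε•w)) h)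
          - ε * (fderiv ℝ (g i) (x+t•(h+ε•w)) w) := by
      rw [map_add, map_smul, smul_eq_mul]; ring
    have ediff : x + t•h - (x + t•(h+ε•w)) = -((t*ε)•w) := by
      rw [smul_add, smul_smul]
      abel
    have b1 : |fderiv ℝ (g i) (x+t•h) h - fderiv ℝ (g i) (x+t•(h+ε•w)) h|
        ≤ K * (t*ε*‖w‖) * ‖h‖ := by
      have := hDlip (x+t•h) (x+t•(h+ε•w)) h1V h2V h
      rw [ediff, norm_neg, norm_smul, Real.norm_eq_abs,
        abs_of_pos (mul_pos ht0 hε0)] at this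
      exact this
    have b2 : |fderiv ℝ (g i) (x+t•(h+ε•w)) w| ≤ K * (t*(‖h‖+‖w‖)) * ‖w‖ := by
      have hd2 := hDlip (x+t•(h+ε•w)) x h2V hxV w
      rw [add_sub_cancel_left, hwi, sub_zero, norm_smul, Real.norm_eq_abs,
        abs_of_pos ht0] at hd2
      have hnw : ‖h + ε•w‖ ≤ ‖h‖ + ‖w‖ := by
        calc ‖h + ε•w‖ ≤ ‖h‖ + ‖ε•w‖ := norm_add_le _ _
          _ ≤ ‖h‖ + ‖w‖ := by
              rw [norm_smul, Real.norm_eq_abs, abs_of_pos hε0]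
              nlinarith [norm_nonneg w]
      have : (K:ℝ) * (t*‖h + ε•w‖) * ‖w‖ ≤ K * (t*(‖h‖+‖w‖)) * ‖w‖ :=
        mul_le_mul_of_nonneg_right (mul_le_mul_of_nonneg_left
          (mul_le_mul_of_nonneg_left hnw ht0.le) (NNReal.coe_nonneg K)) (norm_nonneg w)
      linarith
    have hcomp : |fderiv ℝ (g i) (x+t•h) h - fderiv ℝ (g i) (x+t•(h+ε•w)) (h+ε•w)|
        ≤ ε * C₆ * t := by
      rw [e]
      have h1 := abs_sub (fderiv ℝ (g i) (x+t•h) h - fderiv ℝ (g i) (x+t•(h+ε•w)) h)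
        (ε * (fderiv ℝ (g i) (x+t•(h+ε•w)) w))
      have h2 : |ε * (fderiv ℝ (g i) (x+t•(h+ε•w)) w)| ≤ ε * ((K:ℝ) * (t*(‖h‖+‖w‖)) * ‖w‖) := by
        rw [abs_mul, abs_of_pos hε0]
        exact mul_le_mul_of_nonneg_left b2 hε0.le
      rw [hC₆def]
      nlinarith [NNReal.coe_nonneg K, norm_nonneg w, norm_nonneg h,
        mul_pos ht0 hε0]
    have habs := abs_le.mp hcomp
    have hεCt : ε * C₆ * t ≤ δ/2 * t := mul_le_mul_of_nonneg_right hεC ht0.le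
    have : -(δ/2) * t ≤ fderiv ℝ (g i) (x + t•(h+ε•w)) (h+ε•w) := hta
    linarith [habs.1, habs.2]
  -- pass to the liminf
  have hbound : ∀ᶠ t in 𝓝[>] (0:ℝ),
      (fun t : ℝ => fderiv ℝ (g i) (x + t • h) h / t) t ≤ (K:ℝ)*‖h‖^2 := by
    have ht01 : ∀ᶠ t in 𝓝[>] (0:ℝ), 0 < t := by
      filter_upwards [self_mem_nhdsWithin] with t ht; exact ht
    filter_upwards [hcurve h, ht01] with t hV ht0
    have := hDlip (x + t•h) x hV hxV h
    rw [add_sub_cancel_left, hker, sub_zero, norm_smul, Real.norm_eq_abs,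
      abs_of_pos ht0] at this
    have h2 := (abs_le.mp this).2
    rw [div_le_iff₀ ht0]
    nlinarith [h2]
  have hcobdd : IsCoboundedUnder (· ≥ ·) (𝓝[>] (0:ℝ))
      (fun t : ℝ => fderiv ℝ (g i) (x + t • h) h / t) :=
    (isBoundedUnder_of_eventually_le hbound).isCoboundedUnder_ge
  refine le_of_forall_pos_le_add fun δ hδ => ?_
  have h1 : -δ ≤ liminf (fun t : ℝ => fderiv ℝ (g i) (x + t • h) h / t) (𝓝[>] (0:ℝ)) :=
    le_liminf_of_le hcobdd (key δ hδ)
  linarith
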